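/- Let f and g be continuous, strictly increasing bijections of ℝ satisfying f(x+1) = f(x)+1 and g(x+1) = g(x)+1 for all x ∈ ℝ (i.e., lifts of orientation-preserving circle homeomorphisms). Assume that f(x) < g(x) for every x ∈ ℝ, and assume that there exist NO natural number m ≥ 1, integer n, and points x₀, y₀ ∈ ℝ such that f^[m](x₀) = x₀ + n and g^[m](y₀) = y₀ + n (where f^[m] denotes the m-th iterate). Then the translation numbers of f and g are different: τ(f) ≠ τ(g). -/

import Mathlib

open Int in
/-- For irrational `α`, fractional parts of positive multiples of `α` come
arbitrarily close to `0`. -/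
lemma exists_fract_nat_mul_lt (α : ℝ) (hα : Irrational α) {δ : ℝ} (hδ : 0 < δ) :
    ∃ q : ℕ, 1 ≤ q ∧ Int.fract ((q : ℝ) * α) < δ := by
  rcases le_or_gt 1 δ with h1 | h1
  · exact ⟨1, le_refl 1, (Int.fract_lt_one _).trans_le h1⟩
  -- the subgroup generated by 1 and α is dense
  set S : AddSubgroup ℝ := AddSubgroup.closure ({1, α} : Set ℝ) with hS
  have hdense : Dense (S : Set ℝ) := by
    rcases S.dense_or_cyclic with h | ⟨a, ha⟩
    · exact h
    · exfalso
      have h1S : (1 : ℝ) ∈ S := AddSubgroup.subset_closure (by simp)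
      have hαS : α ∈ S := AddSubgroup.subset_closure (by simp)
      rw [ha, AddSubgroup.mem_closure_singleton] at h1S hαS
      obtain ⟨k, hk⟩ := h1S
      obtain ⟨l, hl⟩ := hαS
      have hk0 : (k : ℝ) ≠ 0 := by
        intro h
        rw [zsmul_eq_mul, h, zero_mul] at hk
        exact one_ne_zero hk.symm
      rw [zsmul_eq_mul] at hk hl
      apply Rat.not_irrational ((l : ℚ) / (k : ℚ))
      have hval : α = (l : ℝ) / (k : ℝ) := by
        field_simp
        linear_combination (l : ℝ) * hk - (k : ℝ) * hl
      have hcast : (((l : ℚ) / (k : ℚ) : ℚ) : ℝ) = (l : ℝ) / (k : ℝ) := by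
        push_cast; ring
      rw [hcast, ← hval]
      exact hα
  -- find a small positive element of S
  obtain ⟨s, hsS, hs0, hsδ⟩ : ∃ s ∈ (S : Set ℝ), 0 < s ∧ s < δ := by
    obtain ⟨s, hsS, hs⟩ := hdense.exists_mem_open isOpen_Ioo
      (Set.nonempty_Ioo.2 hδ)
    exact ⟨s, hsS, hs.1, hs.2⟩
  have hs1 : s < 1 := hsδ.trans h1
  obtain ⟨m, n, hmn⟩ := AddSubgroup.mem_closure_pair.1 hsS
  rw [zsmul_eq_mul, zsmul_eq_mul, mul_one] at hmn
  -- s = m + n * α, and s is irrational (so n ≠ 0)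
  have hn0 : n ≠ 0 := by
    intro h
    rw [h] at hmn
    push_cast at hmn
    have : Int.fract s = 0 := by rw [← hmn]; simpa using Int.fract_intCast m
    rw [Int.fract_eq_self.2 ⟨hs0.le, hs1⟩] at this
    exact hs0.ne' this
  have hsirr : Irrational s := by
    rw [← hmn]
    exact (hα.intCast_mul hn0).intCast_add m
  rcases hn0.lt_or_gt with hneg | hpos
  · -- n < 0 : take q = j * (-n) with j = ⌊1/s⌋
    set j : ℤ := ⌊1 / s⌋ with hj
    have hj1 : 1 ≤ j := by
      rw [hj, Int.le_floor]
      push_cast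
      rw [le_div_iff₀ hs0]
      linarith
    have hjs_le : (j : ℝ) * s ≤ 1 := by
      have := Int.floor_le (1 / s)
      calc (j : ℝ) * s ≤ (1 / s) * s := by
            apply mul_le_mul_of_nonneg_right this hs0.le
        _ = 1 := by field_simp
    have hjs_lt : (j : ℝ) * s < 1 := by
      rcases hjs_le.lt_or_eq with h | h
      · exact h
      · exfalso
        have hjne : (j : ℝ) ≠ 0 := by positivity
        have : s = ((1 / (j : ℚ) : ℚ) : ℝ) := by
          push_cast
          field_simp
          linarith [h]
        exact (hsirr.ne_rat _) this
    have hjs_gt : 1 - s < (j : ℝ) * s := by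
      have := Int.lt_floor_add_one (1 / s)
      have h2 : 1 / s < (j : ℝ) + 1 := this
      have := (div_lt_iff₀ hs0).1 h2
      nlinarith
    refine ⟨(j * (-n)).toNat, ?_, ?_⟩
    · have : (1 : ℤ) ≤ j * (-n) := by
        have : 1 ≤ -n := by omega
        nlinarith
      omega
    · have hcast : (((j * (-n)).toNat : ℝ)) = (j : ℝ) * (-n : ℝ) := by
        have h0 : (0 : ℤ) ≤ j * (-n) := by nlinarith
        have h1 : ((j * (-n)).toNat : ℤ) = j * (-n) := Int.toNat_of_nonneg h0
        have h2 : (((j * (-n)).toNat : ℤ) : ℝ) = ((j * (-n) : ℤ) : ℝ) := by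
          exact_mod_cast congrArg (fun z : ℤ => (z : ℝ)) h1
        push_cast at h2
        push_cast
        linarith [h2]
      have key : ((j * (-n)).toNat : ℝ) * α = (j : ℝ) * m - (j : ℝ) * s := by
        rw [hcast, ← hmn]
        ring
      rw [key]
      have : Int.fract ((j : ℝ) * m - (j : ℝ) * s) = Int.fract (-((j : ℝ) * s)) := by
        have : (j : ℝ) * m - (j : ℝ) * s = -((j : ℝ) * s) + ((j * m : ℤ) : ℝ) := by
          push_cast; ring
        rw [this, Int.fract_add_intCast]
      rw [this]
      have hfr : Int.fract ((j : ℝ) * s) = (j : ℝ) * s := by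
        apply Int.fract_eq_self.2
        constructor
        · positivity
        · exact hjs_lt
      rw [Int.fract_neg (by rw [hfr]; positivity), hfr]
      linarith
  · -- n > 0 : take q = n.toNat
    refine ⟨n.toNat, by omega, ?_⟩
    have hcast : ((n.toNat : ℝ)) = (n : ℝ) := by
      have h1 : (n.toNat : ℤ) = n := Int.toNat_of_nonneg hpos.le
      exact_mod_cast congrArg (fun z : ℤ => (z : ℝ)) h1
    have : ((n.toNat : ℝ)) * α = s - (m : ℝ) := by rw [hcast, ← hmn]; ring
    rw [this, Int.fract_sub_intCast, Int.fract_eq_self.2 ⟨hs0.le, hs1⟩]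
    exact hsδ

/-- Two lifts of orientation-preserving circle homeomorphisms with `f < g`
pointwise and without a common "rational rotation pair" `(m, n)` realized by
periodic-type points have different translation numbers. -/
theorem stmt_0 (f g : CircleDeg1Lift)
    (hfc : Continuous f) (hgc : Continuous g)
    (hfs : StrictMono f) (hgs : StrictMono g)
    (hfb : Function.Bijective f) (hgb : Function.Bijective g)
    (hlt : ∀ x : ℝ, f x < g x)
    (hno : ¬ ∃ (m : ℕ) (n : ℤ) (x₀ y₀ : ℝ), 1 ≤ m ∧
      (⇑f)^[m] x₀ = x₀ + (n : ℝ) ∧ (⇑g)^[m] y₀ = y₀ + (n : ℝ)) :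
    f.translationNumber ≠ g.translationNumber := by
  intro heq
  set α := f.translationNumber with hα
  by_cases hirr : Irrational α
  · -- irrational case
    -- uniform gap δ between f and g
    obtain ⟨δ, hδ0, hδ⟩ : ∃ δ > 0, ∀ x, f x + δ ≤ g x := by
      obtain ⟨x₀, hx₀, hmin⟩ := isCompact_Icc.exists_isMinOn
        (Set.nonempty_Icc.2 zero_le_one)
        ((hgc.sub hfc).continuousOn : ContinuousOn (fun x => g x - f x) (Set.Icc 0 1))
      refine ⟨g x₀ - f x₀, sub_pos.2 (hlt x₀), fun x => ?_⟩
      have h1 : g (Int.fract x) - f (Int.fract x) = g x - f x := by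
        have hf := f.map_fract_sub_fract_eq x
        have hg := g.map_fract_sub_fract_eq x
        linarith
      have h2 : g x₀ - f x₀ ≤ g (Int.fract x) - f (Int.fract x) :=
        hmin ⟨Int.fract_nonneg x, (Int.fract_lt_one x).le⟩
      linarith [h1 ▸ h2]
    -- iterates keep the gap
    have hle : f ≤ g := fun x => (hlt x).le
    have hiter : ∀ (k : ℕ) (x : ℝ), 1 ≤ k → f^[k] x + δ ≤ g^[k] x := by
      intro k x hk
      obtain ⟨k, rfl⟩ : ∃ j, k = j + 1 := ⟨k - 1, by omega⟩
      rw [Function.iterate_succ_apply', Function.iterate_succ_apply']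
      calc f (f^[k] x) + δ ≤ g (f^[k] x) := hδ _
        _ ≤ g (g^[k] x) := g.mono (CircleDeg1Lift.iterate_mono hle k x)
    -- choose q with fract (q α) < δ
    obtain ⟨q, hq1, hqδ⟩ := exists_fract_nat_mul_lt α hirr hδ0
    set p : ℤ := ⌊(q : ℝ) * α⌋ with hp
    have hqirr : Irrational ((q : ℝ) * α) := hirr.natCast_mul (by omega)
    have hplt : (p : ℝ) < (q : ℝ) * α :=
      lt_of_le_of_ne (Int.floor_le _) (Ne.symm (hqirr.ne_int p))
    have hτfq : (f ^ q).translationNumber = (q : ℝ) * α := by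
      rw [CircleDeg1Lift.translationNumber_pow]
    have hτgq : (g ^ q).translationNumber = (q : ℝ) * α := by
      rw [CircleDeg1Lift.translationNumber_pow, ← heq]
    -- every point moves more than p under f^[q]
    have hfq : ∀ x, x + (p : ℝ) < f^[q] x := by
      intro x
      by_contra h
      push_neg at h
      have : (f ^ q).translationNumber ≤ (p : ℝ) := by
        have h' : (f ^ q) x ≤ x + (p : ℝ) := by
          rw [CircleDeg1Lift.coe_pow]; exact h
        exact_mod_cast (f ^ q).translationNumber_le_of_le_add_int h'
      rw [hτfq] at this
      exact absurd this (not_le.2 hplt)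
    -- hence g^[q] moves every point by at least p + δ
    have hgq : ∀ x, x + ((p : ℝ) + δ) ≤ (g ^ q) x := by
      intro x
      rw [CircleDeg1Lift.coe_pow]
      have := hiter q x hq1
      have := hfq x
      linarith
    have : (p : ℝ) + δ ≤ (g ^ q).translationNumber :=
      (g ^ q).le_translationNumber_of_add_le hgq
    rw [hτgq] at this
    have hfr : (q : ℝ) * α - (p : ℝ) = Int.fract ((q : ℝ) * α) := by
      rw [hp]; exact Int.self_sub_floor _
    linarith
  · -- rational case
    rw [Irrational, not_not] at hirr
    obtain ⟨r, hr⟩ := hirr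
    have hden : 0 < r.den := r.pos
    have hfr : f.translationNumber = (r.num : ℝ) / (r.den : ℝ) := by
      rw [← hα, ← hr, Rat.cast_def]
    have hgr : g.translationNumber = (r.num : ℝ) / (r.den : ℝ) := by
      rw [← heq]; exact hfr
    obtain ⟨x₀, hx₀⟩ := (f.translationNumber_eq_rat_iff hfc hden).1 hfr
    obtain ⟨y₀, hy₀⟩ := (g.translationNumber_eq_rat_iff hgc hden).1 hgr
    exact hno ⟨r.den, r.num, x₀, y₀, hden, by
      rw [← CircleDeg1Lift.coe_pow]; exact hx₀, by
      rw [← CircleDeg1Lift.coe_pow]; exact hy₀⟩
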